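/- Let R be a Hecke symmetry on V⊗V with parameter q, A an associative unital ℂ-algebra, and M ∈ Mat_m(A); write M₁ := M⊗I_m ∈ Mat_{m²}(A) and, for nonzero u, L(u) := I + u⁻¹M with L₁(u) := L(u)⊗I_m. Then M satisfies the reflection equation R M₁ R M₁ = M₁ R M₁ R if and only if for all distinct nonzero u, v ∈ ℂ the braided Yangian defining relation holds with the trigonometric current R-matrix: (R − (u(q−q⁻¹)/(u−v))I) L₁(u) R L₁(v) = L₁(v) R L₁(u) (R − (u(q−q⁻¹)/(u−v))I). (This is the evaluation map L(u) ↦ I + M/u of the braided Yangian associated with a Hecke symmetry, whose target is the reflection equation algebra.) -/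

import Mathlib

/-- For an operator `X` on `V ⊗ V` (`V = ℂ^m`), the induced operator `X₁₂ = X ⊗ I`
on `V ⊗ V ⊗ V`. -/
def amp12 {m : ℕ} (X : Matrix (Fin m × Fin m) (Fin m × Fin m) ℂ) :
    Matrix (Fin m × Fin m × Fin m) (Fin m × Fin m × Fin m) ℂ :=
  Matrix.of fun p q => X (p.1, p.2.1) (q.1, q.2.1) * (if p.2.2 = q.2.2 then 1 else 0)

/-- For an operator `X` on `V ⊗ V`, the induced operator `X₂₃ = I ⊗ X` on `V ⊗ V ⊗ V`. -/
def amp23 {m : ℕ} (X : Matrix (Fin m × Fin m) (Fin m × Fin m) ℂ) :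
    Matrix (Fin m × Fin m × Fin m) (Fin m × Fin m × Fin m) ℂ :=
  Matrix.of fun p q => (if p.1 = q.1 then 1 else 0) * X p.2 q.2

/-- A complex `m²×m²` matrix regarded as a matrix over an algebra `A` via `algebraMap ℂ A`. -/
def matlift {m : ℕ} {A : Type*} [Ring A] [Algebra ℂ A]
    (X : Matrix (Fin m × Fin m) (Fin m × Fin m) ℂ) :
    Matrix (Fin m × Fin m) (Fin m × Fin m) A :=
  X.map (algebraMap ℂ A)

/-- For `M ∈ Mat_m(A)`, the Kronecker product `M₁ = M ⊗ I_m ∈ Mat_{m²}(A)`. -/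
def amp1 {m : ℕ} {A : Type*} [Ring A] (M : Matrix (Fin m) (Fin m) A) :
    Matrix (Fin m × Fin m) (Fin m × Fin m) A :=
  Matrix.of fun p q => M p.1 q.1 * (if p.2 = q.2 then 1 else 0)

section Aux

variable {m : ℕ} {A : Type*} [Ring A] [Algebra ℂ A]

lemma matlift_mul (X Y : Matrix (Fin m × Fin m) (Fin m × Fin m) ℂ) :
    matlift (X * Y) = (matlift X : Matrix _ _ A) * matlift Y :=
  Matrix.map_mul

lemma matlift_one : (matlift 1 : Matrix (Fin m × Fin m) (Fin m × Fin m) A) = 1 := by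
  simp [matlift]

lemma matlift_add (X Y : Matrix (Fin m × Fin m) (Fin m × Fin m) ℂ) :
    matlift (X + Y) = (matlift X : Matrix _ _ A) + matlift Y := by
  ext p r; simp [matlift]

lemma matlift_sub (X Y : Matrix (Fin m × Fin m) (Fin m × Fin m) ℂ) :
    matlift (X - Y) = (matlift X : Matrix _ _ A) - matlift Y := by
  ext p r; simp [matlift]

lemma matlift_smul (c : ℂ) (X : Matrix (Fin m × Fin m) (Fin m × Fin m) ℂ) :
    matlift (c • X) = c • (matlift X : Matrix _ _ A) := by
  ext p r
  simp only [matlift, Matrix.map_apply, Matrix.smul_apply, smul_eq_mul, map_mul]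
  rw [Algebra.smul_def]

lemma amp1_one : (amp1 1 : Matrix (Fin m × Fin m) (Fin m × Fin m) A) = 1 := by
  ext ⟨i, j⟩ ⟨k, l⟩
  simp [amp1, Matrix.one_apply, Prod.ext_iff]
  split_ifs <;> simp_all

lemma amp1_add (X Y : Matrix (Fin m) (Fin m) A) :
    amp1 (X + Y) = amp1 X + amp1 Y := by
  ext ⟨i, j⟩ ⟨k, l⟩
  simp [amp1, add_mul]
  split_ifs <;> simp

lemma amp1_smul (c : ℂ) (X : Matrix (Fin m) (Fin m) A) :
    amp1 (c • X) = c • amp1 X := by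
  ext ⟨i, j⟩ ⟨k, l⟩
  simp [amp1, smul_mul_assoc]

end Aux

lemma key_diff {B : Type*} [Ring B] [Algebra ℂ B] (R N : B) (lam u v : ℂ)
    (hu : u ≠ 0) (hv : v ≠ 0) (huv : u ≠ v) (hH : R * R = lam • R + 1) :
    (R - (u * lam / (u - v)) • 1) * (1 + u⁻¹ • N) * R * (1 + v⁻¹ • N)
      - (1 + v⁻¹ • N) * R * (1 + u⁻¹ • N) * (R - (u * lam / (u - v)) • 1)
    = (u⁻¹ * v⁻¹) • (R * N * R * N - N * R * N * R) := by
  set a := u * lam / (u - v) with ha_def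
  have hc : a * v⁻¹ - a * u⁻¹ = v⁻¹ * lam := by
    have huv' : u - v ≠ 0 := sub_ne_zero.mpr huv
    rw [ha_def]
    field_simp
  have step1 : (R - a • 1) * (1 + u⁻¹ • N) * R * (1 + v⁻¹ • N)
      - (1 + v⁻¹ • N) * R * (1 + u⁻¹ • N) * (R - a • 1)
    = v⁻¹ • (R * R * N - N * (R * R)) + (a * v⁻¹ - a * u⁻¹) • (N * R - R * N)
      + (u⁻¹ * v⁻¹) • (R * N * R * N - N * R * N * R) := by
    simp only [mul_add, add_mul, sub_mul, mul_sub, smul_sub, smul_add,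
      smul_mul_assoc, mul_smul_comm, mul_one, one_mul, smul_smul, mul_assoc]
    match_scalars <;> ring
  rw [step1, hH, hc]
  simp only [add_mul, mul_add, smul_mul_assoc, mul_smul_comm, one_mul, mul_one]
  match_scalars <;> ring

lemma key_iff {B : Type*} [Ring B] [Algebra ℂ B] (R N : B) (lam : ℂ)
    (hH : R * R = lam • R + 1) :
    (R * N * R * N = N * R * N * R) ↔
      ∀ u v : ℂ, u ≠ 0 → v ≠ 0 → u ≠ v →
        (R - (u * lam / (u - v)) • 1) * (1 + u⁻¹ • N) * R * (1 + v⁻¹ • N)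
          = (1 + v⁻¹ • N) * R * (1 + u⁻¹ • N) * (R - (u * lam / (u - v)) • 1) := by
  constructor
  · intro hRE u v hu hv huv
    have h := key_diff R N lam u v hu hv huv hH
    rw [hRE, sub_self, smul_zero] at h
    exact sub_eq_zero.mp h
  · intro h
    have h12 := h 1 2 one_ne_zero two_ne_zero (by norm_num)
    have hd := key_diff R N lam 1 2 one_ne_zero two_ne_zero (by norm_num) hH
    rw [h12, sub_self] at hd
    have h2 : ((1:ℂ)⁻¹ * 2⁻¹) • (R * N * R * N - N * R * N * R) = 0 := hd.symm
    have h3 := congrArg (fun x => (((1:ℂ)⁻¹ * 2⁻¹)⁻¹) • x) h2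
    simp only [smul_smul, smul_zero] at h3
    norm_num at h3
    exact sub_eq_zero.mp h3

/-- Evaluation map of the braided Yangian (Hecke case): `M` satisfies the reflection equation
`R M₁ R M₁ = M₁ R M₁ R` iff `L(u) = I + M/u` satisfies the braided Yangian defining relation
with the trigonometric current `R`-matrix `R(u,v) = R − (u(q−q⁻¹)/(u−v))I`:
`R(u,v) L₁(u) R L₁(v) = L₁(v) R L₁(u) R(u,v)` for all distinct nonzero `u, v`. -/
theorem braided_Yangian_evaluation_hecke (m : ℕ) (hm : 1 ≤ m)
    (R : Matrix (Fin m × Fin m) (Fin m × Fin m) ℂ)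
    (hbraid : amp12 R * amp23 R * amp12 R = amp23 R * amp12 R * amp23 R)
    (q : ℂ) (hq : q ≠ 0) (hq2 : q ^ 2 ≠ 1)
    (hHecke : (q • (1 : Matrix (Fin m × Fin m) (Fin m × Fin m) ℂ) - R) * (q⁻¹ • 1 + R) = 0)
    (A : Type*) [Ring A] [Algebra ℂ A]
    (M : Matrix (Fin m) (Fin m) A) :
    (matlift R * amp1 M * matlift R * amp1 M = amp1 M * matlift R * amp1 M * matlift R) ↔
      (∀ u v : ℂ, u ≠ 0 → v ≠ 0 → u ≠ v →
        matlift (R - (u * (q - q⁻¹) / (u - v)) • 1) * amp1 (1 + u⁻¹ • M) * matlift R *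
            amp1 (1 + v⁻¹ • M)
          = amp1 (1 + v⁻¹ • M) * matlift R * amp1 (1 + u⁻¹ • M) *
            matlift (R - (u * (q - q⁻¹) / (u - v)) • 1)) := by
  -- the Hecke condition over ℂ
  have hH : R * R = (q - q⁻¹) • R + 1 := by
    have h := hHecke
    rw [sub_mul, mul_add, mul_add, smul_mul_assoc, smul_mul_assoc, one_mul,
      mul_smul_comm, mul_one, smul_smul, mul_inv_cancel₀ hq, one_smul] at h
    simp only [one_mul] at h
    rw [sub_eq_zero] at h
    have h' : R * R = 1 + q • R - q⁻¹ • R := by rw [h, add_sub_cancel_left]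
    rw [h', sub_smul]
    abel
  -- lifted Hecke condition
  have hHB : (matlift R : Matrix _ _ A) * matlift R = (q - q⁻¹) • matlift R + 1 := by
    rw [← matlift_mul, hH, matlift_add, matlift_smul, matlift_one]
  have := key_iff (matlift R : Matrix (Fin m × Fin m) (Fin m × Fin m) A) (amp1 M)
    (q - q⁻¹) hHB
  simpa only [matlift_sub, matlift_smul, matlift_one, amp1_add, amp1_smul, amp1_one]
    using this
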